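/- Let μ > 0, f : ℝ^d → ℝ be differentiable and μ-strongly convex with minimizer x⋆, and let X be a twice-differentiable solution of X''(t) + 2√μ X'(t) + ∇f(X t) = 0. Define V(t) = f(X t) - f(x⋆) + (4/9)μ ‖X t - x⋆‖² + (4/3)√μ ⟪X t - x⋆, X'(t)⟫ + (1/2)‖X'(t)‖². Then V'(t) ≤ -(4/3)√μ V(t) for all t. -/

import Mathlib

open scoped RealInnerProductSpace
open Real Set

theorem polyak_oscillator_improved_lyapunov_rate
    (d : ℕ) (μ : ℝ) (hμ : 0 < μ)
    (f : EuclideanSpace ℝ (Fin d) → ℝ) (hf : Differentiable ℝ f)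
    (xstar : EuclideanSpace ℝ (Fin d))
    (hsc : ∀ x y, f y ≥ f x + ⟪gradient f x, y - x⟫ + (μ / 2) * ‖y - x‖ ^ 2)
    (hmin : ∀ y, f xstar ≤ f y)
    (X X' X'' : ℝ → EuclideanSpace ℝ (Fin d))
    (hX : ∀ t, HasDerivAt X (X' t) t)
    (hX' : ∀ t, HasDerivAt X' (X'' t) t)
    (hODE : ∀ t, X'' t + (2 * Real.sqrt μ) • X' t + gradient f (X t) = 0)
    (V : ℝ → ℝ)
    (hV : ∀ t, V t = f (X t) - f xstar + (4 / 9) * μ * ‖X t - xstar‖ ^ 2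
        + (4 / 3) * Real.sqrt μ * ⟪X t - xstar, X' t⟫ + (1 / 2) * ‖X' t‖ ^ 2) :
    ∀ t, deriv V t ≤ -(4 / 3) * Real.sqrt μ * V t := by
  intro t
  have hs0 : 0 < Real.sqrt μ := Real.sqrt_pos.mpr hμ
  have hs2 : Real.sqrt μ ^ 2 = μ := Real.sq_sqrt hμ.le
  set s := Real.sqrt μ with hs
  -- derivative of f ∘ X
  have hgrad : HasDerivAt (fun τ => f (X τ)) ⟪gradient f (X t), X' t⟫ t := by
    have h1 := ((hf (X t)).hasGradientAt).hasFDerivAt.comp_hasDerivAt t (hX t)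
    refine h1.congr_deriv ?_
    simp
  have hg : ∀ u, HasDerivAt (fun τ => X τ - xstar) (X' u) u := fun u => (hX u).sub_const xstar
  have h2 := (((hg t).inner ℝ (hg t)).const_mul ((4:ℝ)/9*μ))
  have h3 := (((hg t).inner ℝ (hX' t)).const_mul ((4:ℝ)/3*s))
  have h4 := (((hX' t).inner ℝ (hX' t)).const_mul ((1:ℝ)/2))
  have hW := (((hgrad.sub_const (f xstar)).add h2).add h3).add h4
  have hfun : V = fun τ => (f (X τ) - f xstar)
      + (4/9*μ) * ⟪X τ - xstar, X τ - xstar⟫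
      + (4/3*s) * ⟪X τ - xstar, X' τ⟫ + (1/2) * ⟪X' τ, X' τ⟫ := by
    funext τ
    rw [hV τ, real_inner_self_eq_norm_sq, real_inner_self_eq_norm_sq]
  rw [hfun] at *
  have hderiv := hW.deriv
  erw [hderiv]
  -- use ODE
  have hXX : X'' t = -((2 * s) • X' t) - gradient f (X t) := by
    have h := hODE t
    have : X'' t + (2 * s) • X' t + gradient f (X t) = 0 := h
    linear_combination (norm := module) this
  have e1 : ⟪X t - xstar, X'' t⟫ = -(2*s) * ⟪X t - xstar, X' t⟫ - ⟪X t - xstar, gradient f (X t)⟫ := by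
    rw [hXX]; rw [inner_sub_right, inner_neg_right, inner_smul_right]; ring
  have e2 : ⟪X' t, X'' t⟫ = -(2*s) * ⟪X' t, X' t⟫ - ⟪X' t, gradient f (X t)⟫ := by
    rw [hXX]; rw [inner_sub_right, inner_neg_right, inner_smul_right]; ring
  have e3 : ⟪X'' t, X' t⟫ = ⟪X' t, X'' t⟫ := real_inner_comm _ _
  have e4 : ⟪X' t, X t - xstar⟫ = ⟪X t - xstar, X' t⟫ := real_inner_comm _ _
  have e5 : ⟪gradient f (X t), X' t⟫ = ⟪X' t, gradient f (X t)⟫ := real_inner_comm _ _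
  -- strong convexity
  have key : ⟪X t - xstar, gradient f (X t)⟫
      ≥ f (X t) - f xstar + (μ/2) * ⟪X t - xstar, X t - xstar⟫ := by
    have h := hsc (X t) xstar
    have h1 : ⟪gradient f (X t), xstar - X t⟫ = -⟪X t - xstar, gradient f (X t)⟫ := by
      rw [real_inner_comm, inner_sub_left, inner_sub_left]; ring
    have h2 : ‖xstar - X t‖ = ‖X t - xstar‖ := norm_sub_rev _ _
    rw [h1, h2, ← real_inner_self_eq_norm_sq] at h
    linarith
  have hgg : (0:ℝ) ≤ ⟪X t - xstar, X t - xstar⟫ := real_inner_self_nonneg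
  have hkey2 : s * (⟪X t - xstar, gradient f (X t)⟫
      - (f (X t) - f xstar + (4/9*μ) * ⟪X t - xstar, X t - xstar⟫)) ≥ 0 := by
    apply mul_nonneg hs0.le
    nlinarith [mul_nonneg hμ.le hgg]
  have hp : s * s * ⟪X t - xstar, X' t⟫ = μ * ⟪X t - xstar, X' t⟫ := by
    rw [← hs2]; ring
  simp only [e3, e1, e2, e4, e5]
  linarith [hkey2, hp]
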